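/- Let A = (a_{ij}) be an n×n complex matrix and Φ an orthogonal basis of ℂ^n consisting of eigenvectors of A, with λ_φ the eigenvalue of φ ∈ Φ. Suppose there exist d ∈ ℂ and m₀ ∈ H such that for every character μ of H the vector φ_μ lies in Φ with A φ_μ = d · μ(m₀) · φ_μ, and the assignment μ ↦ φ_μ is injective. Set Φ₀ = Φ \ {φ_μ : μ ∈ Ĥ}. Then ∑_{φ ∈ Φ₀} ∑_{χ ∈ Ĝ} λ_φ · |P_χ(φ)|² / ⟨φ, φ⟩ = |G| · ∑_i (w i)(h i) a_{ii} − δ · d · |G|² · |H| / m, where δ = 1 if m₀ is the identity element of H and δ = 0 otherwise. (This is the paper's Corollary (cor:per-avg), the exact double average of squared periods over the cuspidal subspace, in the linear-algebra form in which it is proved: A is the Brandt matrix A_m, d = deg T_m, m₀ is the class of m in Cl⁺(N(𝒪̂)) ≅ H, and δ = δ⁺(𝒪, m).) -/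

import Mathlib

open scoped Classical

section Chars

variable {K : Type*} [CommGroup K] [Fintype K]

lemma char_pow_card (χ : K →* ℂˣ) (t : K) : ((χ t : ℂ)) ^ Fintype.card K = 1 := by
  have h : χ t ^ Fintype.card K = 1 := by rw [← map_pow, pow_card_eq_one, map_one]
  rw [← Units.val_pow_eq_pow_val, h, Units.val_one]

lemma conj_char (χ : K →* ℂˣ) (t : K) :
    (starRingEnd ℂ) ((χ t : ℂ)) = ((χ t : ℂ))⁻¹ := by
  have hn : ‖(χ t : ℂ)‖ = 1 :=
    Complex.norm_eq_one_of_pow_eq_one (char_pow_card χ t) Fintype.card_ne_zero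
  exact (Complex.inv_eq_conj hn).symm

lemma char_mul_conj (χ : K →* ℂˣ) (t : K) :
    (χ t : ℂ) * (starRingEnd ℂ) ((χ t : ℂ)) = 1 := by
  rw [conj_char, mul_inv_cancel₀ (Units.ne_zero _)]

lemma sum_char_eq_zero {χ : K →* ℂˣ} (hχ : χ ≠ 1) : ∑ t : K, (χ t : ℂ) = 0 := by
  obtain ⟨s, hs⟩ : ∃ s, χ s ≠ 1 := by
    by_contra h
    push_neg at h
    exact hχ (MonoidHom.ext fun t => by rw [h t, MonoidHom.one_apply])
  have key : (χ s : ℂ) * ∑ t : K, (χ t : ℂ) = ∑ t : K, (χ t : ℂ) := by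
    rw [Finset.mul_sum]
    exact Fintype.sum_bijective (fun t => s * t) (Group.mulLeft_bijective s) _ _
      (fun t => by rw [map_mul]; push_cast; ring)
  have h2 : ((χ s : ℂ) - 1) * ∑ t : K, (χ t : ℂ) = 0 := by
    rw [sub_mul, one_mul, key, sub_self]
  rcases mul_eq_zero.mp h2 with h | h
  · exact absurd (Units.val_eq_one.mp (sub_eq_zero.mp h)) hs
  · exact h

lemma card_char [Fintype (K →* ℂˣ)] : Fintype.card (K →* ℂˣ) = Fintype.card K :=
  Fintype.card_congr (CommGroup.monoidHom_mulEquiv_of_hasEnoughRootsOfUnity K ℂ).some.toEquiv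

lemma sum_chars_at [Fintype (K →* ℂˣ)] (g : K) :
    ∑ χ : K →* ℂˣ, (χ g : ℂ) = if g = 1 then (Fintype.card K : ℂ) else 0 := by
  split_ifs with hg
  · subst hg
    simp [card_char]
  · let ev : (K →* ℂˣ) →* ℂˣ :=
      { toFun := fun χ => χ g, map_one' := rfl, map_mul' := fun χ ψ => rfl }
    have hev : ev ≠ 1 := by
      obtain ⟨φ, hφ⟩ := CommGroup.exists_apply_ne_one_of_hasEnoughRootsOfUnity K ℂ hg
      intro h
      exact hφ (by have := congrArg (fun f => f φ) h; exact this)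
    exact sum_char_eq_zero hev

end Chars

/- **Statement 8.** Let `A` be an `n × n` complex matrix and `Φ` an orthogonal basis of
`ℂ^n` of eigenvectors of `A` with eigenvalues `lam φ`.  Suppose there are `d ∈ ℂ` and
`m₀ ∈ H` such that each Eisenstein vector `φ_μ (i) = μ (ν i)` lies in `Φ` with
`A φ_μ = d · μ(m₀) · φ_μ`, and `μ ↦ φ_μ` is injective.  With `Φ₀ = Φ \ {φ_μ}`:
`∑_{φ ∈ Φ₀} ∑_{χ ∈ Ĝ} lam φ |P_χ(φ)|² / ⟨φ,φ⟩ = |G| ∑_i (w i)(h i) a_{ii} − δ d |G|² |H| / m`,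
where `δ = 1` if `m₀ = 1` and `δ = 0` otherwise, and `m = ∑ (w i)⁻¹`. -/
open Finset in
open scoped Classical in
theorem cuspidal_double_average_of_squared_periods
    (n : ℕ) (hn : 1 ≤ n) (w : Fin n → ℝ) (hw : ∀ i, 0 < w i)
    (G : Type*) [CommGroup G] [Fintype G] [Fintype (G →* ℂˣ)]
    (H : Type*) [CommGroup H] [Fintype H] [Fintype (H →* ℂˣ)]
    (x : G → Fin n) (θ : G →* H) (ν : Fin n → H)
    (hν : ∀ t : G, ν (x t) = θ t)
    (A : Matrix (Fin n) (Fin n) ℂ)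
    (Φ : Finset (Fin n → ℂ)) (lam : (Fin n → ℂ) → ℂ)
    (hΦ0 : ∀ φ ∈ Φ, φ ≠ 0)
    (hΦorth : ∀ φ ∈ Φ, ∀ ψ ∈ Φ, φ ≠ ψ →
      ∑ i, ((w i : ℂ))⁻¹ * φ i * (starRingEnd ℂ) (ψ i) = 0)
    (hΦspan : Submodule.span ℂ (Φ : Set (Fin n → ℂ)) = ⊤)
    (hEig : ∀ φ ∈ Φ, A.mulVec φ = lam φ • φ)
    (d : ℂ) (m₀ : H)
    (hEis : ∀ μ : H →* ℂˣ, (fun i => ((μ (ν i) : ℂ))) ∈ Φ)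
    (hEisEig : ∀ μ : H →* ℂˣ,
      A.mulVec (fun i => ((μ (ν i) : ℂ))) = (d * (μ m₀ : ℂ)) • (fun i => ((μ (ν i) : ℂ))))
    (hinj : Function.Injective (fun (μ : H →* ℂˣ) => (fun i => ((μ (ν i) : ℂ))))) :
    ∑ φ ∈ Φ.filter (fun φ => ∀ μ : H →* ℂˣ, φ ≠ fun i => ((μ (ν i) : ℂ))),
        ∑ χ : G →* ℂˣ,
          lam φ * ((‖∑ t : G, φ (x t) * ((χ t : ℂ))⁻¹‖ : ℂ)) ^ 2 /
            (∑ i, ((w i : ℂ))⁻¹ * φ i * (starRingEnd ℂ) (φ i))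
      = (Fintype.card G : ℂ) * (∑ i, (w i : ℂ) *
            ((Finset.univ.filter (fun t : G => x t = i)).card : ℂ) * A i i)
        - (if m₀ = 1 then (1 : ℂ) else 0) * d * (Fintype.card G : ℂ) ^ 2
            * (Fintype.card H : ℂ) / ((∑ i, (w i)⁻¹ : ℝ) : ℂ) := by
  classical
  -- abbreviations
  set ip : (Fin n → ℂ) → ℂ :=
    fun φ => ∑ i, ((w i : ℂ))⁻¹ * φ i * (starRingEnd ℂ) (φ i) with hip_def
  set term : (Fin n → ℂ) → ℂ :=
    fun φ => ∑ χ : G →* ℂˣ,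
      lam φ * ((‖∑ t : G, φ (x t) * ((χ t : ℂ))⁻¹‖ : ℂ)) ^ 2 / ip φ with hterm_def
  -- inner product of a nonzero vector with itself is nonzero
  have hipself : ∀ φ : Fin n → ℂ, φ ≠ 0 → ip φ ≠ 0 := by
    intro φ hφ
    have hre : ip φ = ((∑ i, (w i)⁻¹ * Complex.normSq (φ i) : ℝ) : ℂ) := by
      rw [hip_def]
      push_cast
      refine Finset.sum_congr rfl fun i _ => ?_
      rw [mul_assoc, Complex.mul_conj]
    rw [hre]
    obtain ⟨k, hk⟩ : ∃ k, φ k ≠ 0 := by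
      by_contra h; push_neg at h; exact hφ (funext h)
    have hpos : 0 < ∑ i, (w i)⁻¹ * Complex.normSq (φ i) := by
      refine Finset.sum_pos'
        (fun i _ => mul_nonneg (inv_nonneg.mpr (hw i).le) (Complex.normSq_nonneg _))
        ⟨k, Finset.mem_univ k, mul_pos (inv_pos.mpr (hw k)) (Complex.normSq_pos.mpr hk)⟩
    exact_mod_cast hpos.ne'
  -- reproducing kernel identity
  have hrepro : ∀ i j : Fin n,
      ∑ φ ∈ Φ, φ j * (starRingEnd ℂ) (φ i) / ip φ
        = if i = j then (w i : ℂ) else 0 := by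
    intro i j
    have hmem : (fun k => if k = i then (1 : ℂ) else 0)
        ∈ Submodule.span ℂ (Φ : Set (Fin n → ℂ)) := by
      rw [hΦspan]; trivial
    obtain ⟨f, -, hf⟩ := Submodule.mem_span_finset.mp hmem
    have hcoef : ∀ ψ ∈ Φ, f ψ * ip ψ = ((w i : ℂ))⁻¹ * (starRingEnd ℂ) (ψ i) := by
      intro ψ hψ
      have h1 : ∑ k, ((w k : ℂ))⁻¹ * ((∑ φ ∈ Φ, f φ • φ) k) * (starRingEnd ℂ) (ψ k)
          = ∑ k, ((w k : ℂ))⁻¹ * (if k = i then (1 : ℂ) else 0) * (starRingEnd ℂ) (ψ k) := by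
        rw [hf]
      have hL : ∑ k, ((w k : ℂ))⁻¹ * ((∑ φ ∈ Φ, f φ • φ) k) * (starRingEnd ℂ) (ψ k)
          = f ψ * ip ψ := by
        calc ∑ k, ((w k : ℂ))⁻¹ * ((∑ φ ∈ Φ, f φ • φ) k) * (starRingEnd ℂ) (ψ k)
            = ∑ k, ∑ φ ∈ Φ, f φ * (((w k : ℂ))⁻¹ * φ k * (starRingEnd ℂ) (ψ k)) := by
              refine Finset.sum_congr rfl fun k _ => ?_
              rw [Finset.sum_apply]
              simp only [Pi.smul_apply, smul_eq_mul]
              rw [Finset.mul_sum, Finset.sum_mul]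
              exact Finset.sum_congr rfl fun φ _ => by ring
          _ = ∑ φ ∈ Φ, f φ * ∑ k, ((w k : ℂ))⁻¹ * φ k * (starRingEnd ℂ) (ψ k) := by
              rw [Finset.sum_comm]
              exact Finset.sum_congr rfl fun φ _ => (Finset.mul_sum _ _ _).symm
          _ = f ψ * ip ψ := by
              refine Finset.sum_eq_single_of_mem ψ hψ fun φ hφ hne => ?_
              rw [hΦorth φ hφ ψ hψ hne, mul_zero]
      have hR : ∑ k, ((w k : ℂ))⁻¹ * (if k = i then (1 : ℂ) else 0) * (starRingEnd ℂ) (ψ k)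
          = ((w i : ℂ))⁻¹ * (starRingEnd ℂ) (ψ i) := by
        rw [Finset.sum_eq_single i (fun k _ hk => by simp [hk])
          (fun h => absurd (Finset.mem_univ i) h)]
        simp
      rw [← hL, h1, hR]
    have hev : ∑ φ ∈ Φ, f φ * φ j = if j = i then (1 : ℂ) else 0 := by
      have h2 := congrFun hf j
      simpa using h2
    calc ∑ φ ∈ Φ, φ j * (starRingEnd ℂ) (φ i) / ip φ
        = ∑ φ ∈ Φ, (w i : ℂ) * (f φ * φ j) := by
          refine Finset.sum_congr rfl fun φ hφ => ?_
          have hne := hipself φ (hΦ0 φ hφ)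
          have hfφ : f φ = ((w i : ℂ))⁻¹ * (starRingEnd ℂ) (φ i) / ip φ :=
            (eq_div_iff hne).mpr (hcoef φ hφ)
          have hwne : (w i : ℂ) ≠ 0 := Complex.ofReal_ne_zero.mpr (hw i).ne'
          rw [hfφ]
          field_simp
      _ = (w i : ℂ) * (if j = i then (1 : ℂ) else 0) := by rw [← Finset.mul_sum, hev]
      _ = if i = j then (w i : ℂ) else 0 := by
          by_cases h : i = j
          · simp [h]
          · rw [if_neg (fun hji : j = i => h hji.symm), mul_zero, if_neg h]
  -- character sum of squared periods, for an arbitrary vector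
  have hS : ∀ φ : Fin n → ℂ,
      ∑ χ : G →* ℂˣ, ((‖∑ t : G, φ (x t) * ((χ t : ℂ))⁻¹‖ : ℂ)) ^ 2
        = (Fintype.card G : ℂ) * ∑ t : G, φ (x t) * (starRingEnd ℂ) (φ (x t)) := by
    intro φ
    have habs : ∀ z : ℂ, ((‖z‖ : ℂ)) ^ 2 = z * (starRingEnd ℂ) z := by
      intro z
      rw [Complex.mul_conj]
      norm_cast
      exact Complex.sq_norm z
    calc ∑ χ : G →* ℂˣ, ((‖∑ t : G, φ (x t) * ((χ t : ℂ))⁻¹‖ : ℂ)) ^ 2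
        = ∑ χ : G →* ℂˣ, ∑ t : G, ∑ s : G,
            (φ (x t) * ((χ t : ℂ))⁻¹) * ((starRingEnd ℂ) (φ (x s)) * (χ s : ℂ)) := by
          refine Finset.sum_congr rfl fun χ _ => ?_
          rw [habs, map_sum, Finset.sum_mul_sum]
          refine Finset.sum_congr rfl fun t _ => Finset.sum_congr rfl fun s _ => ?_
          rw [map_mul, map_inv₀, conj_char, inv_inv]
      _ = ∑ t : G, ∑ s : G, (φ (x t) * (starRingEnd ℂ) (φ (x s))) *
            ∑ χ : G →* ℂˣ, ((χ (t⁻¹ * s) : ℂ)) := by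
          rw [Finset.sum_comm]
          refine Finset.sum_congr rfl fun t _ => ?_
          rw [Finset.sum_comm]
          refine Finset.sum_congr rfl fun s _ => ?_
          rw [Finset.mul_sum]
          refine Finset.sum_congr rfl fun χ _ => ?_
          rw [map_mul, map_inv]
          push_cast
          ring
      _ = ∑ t : G, (φ (x t) * (starRingEnd ℂ) (φ (x t))) * (Fintype.card G : ℂ) := by
          refine Finset.sum_congr rfl fun t _ => ?_
          have hx : ∀ s : G, (∑ χ : G →* ℂˣ, ((χ (t⁻¹ * s) : ℂ)))
              = if s = t then (Fintype.card G : ℂ) else 0 := by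
            intro s
            rw [sum_chars_at]
            by_cases h : s = t
            · simp [h]
            · rw [if_neg (fun h1 => h (by rwa [inv_mul_eq_one, eq_comm] at h1)), if_neg h]
          simp only [hx, mul_ite, mul_zero, Finset.sum_ite_eq', Finset.mem_univ, if_true]
      _ = (Fintype.card G : ℂ) * ∑ t : G, φ (x t) * (starRingEnd ℂ) (φ (x t)) := by
          rw [← Finset.sum_mul, mul_comm]
  -- fiberwise regrouping
  have hfiber : ∀ φ : Fin n → ℂ,
      ∑ t : G, φ (x t) * (starRingEnd ℂ) (φ (x t))
        = ∑ i, ((Finset.univ.filter (fun t : G => x t = i)).card : ℂ)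
            * (φ i * (starRingEnd ℂ) (φ i)) := by
    intro φ
    rw [← Finset.sum_fiberwise' Finset.univ x
      (fun i => φ i * (starRingEnd ℂ) (φ i))]
    refine Finset.sum_congr rfl fun i _ => ?_
    rw [Finset.sum_const, nsmul_eq_mul]
  -- diagonal identity
  have hdiag : ∀ i, ∑ φ ∈ Φ, lam φ * φ i * (starRingEnd ℂ) (φ i) / ip φ
      = (w i : ℂ) * A i i := by
    intro i
    calc ∑ φ ∈ Φ, lam φ * φ i * (starRingEnd ℂ) (φ i) / ip φ
        = ∑ φ ∈ Φ, ∑ j, A i j * (φ j * (starRingEnd ℂ) (φ i) / ip φ) := by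
          refine Finset.sum_congr rfl fun φ hφ => ?_
          have h1 : ∑ j, A i j * φ j = lam φ * φ i := by
            have h2 := congrFun (hEig φ hφ) i
            simp only [Pi.smul_apply, smul_eq_mul] at h2
            rw [← h2]
            simp [Matrix.mulVec, dotProduct]
          rw [← h1, Finset.sum_mul, Finset.sum_div]
          exact Finset.sum_congr rfl fun j _ => by ring
      _ = ∑ j, A i j * ∑ φ ∈ Φ, φ j * (starRingEnd ℂ) (φ i) / ip φ := by
          rw [Finset.sum_comm]
          exact Finset.sum_congr rfl fun j _ => (Finset.mul_sum _ _ _).symm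
      _ = ∑ j, A i j * (if i = j then (w i : ℂ) else 0) := by
          exact Finset.sum_congr rfl fun j _ => by rw [hrepro i j]
      _ = (w i : ℂ) * A i i := by
          simp only [mul_ite, mul_zero, Finset.sum_ite_eq, Finset.mem_univ, if_true]
          ring
  -- total sum over all of Φ
  have htotal : ∑ φ ∈ Φ, term φ
      = (Fintype.card G : ℂ) * (∑ i, (w i : ℂ) *
          ((Finset.univ.filter (fun t : G => x t = i)).card : ℂ) * A i i) := by
    calc ∑ φ ∈ Φ, term φ
        = ∑ φ ∈ Φ, ∑ i, (Fintype.card G : ℂ)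
            * (((Finset.univ.filter (fun t : G => x t = i)).card : ℂ)
              * (lam φ * φ i * (starRingEnd ℂ) (φ i) / ip φ)) := by
          refine Finset.sum_congr rfl fun φ hφ => ?_
          have h1 : term φ = lam φ / ip φ * ∑ χ : G →* ℂˣ,
              ((‖∑ t : G, φ (x t) * ((χ t : ℂ))⁻¹‖ : ℂ)) ^ 2 := by
            rw [hterm_def, Finset.mul_sum]
            exact Finset.sum_congr rfl fun χ _ => by ring
          rw [h1, hS φ, hfiber φ, Finset.mul_sum, Finset.mul_sum]
          exact Finset.sum_congr rfl fun i _ => by ring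
      _ = ∑ i, (Fintype.card G : ℂ)
            * (((Finset.univ.filter (fun t : G => x t = i)).card : ℂ)
              * ∑ φ ∈ Φ, lam φ * φ i * (starRingEnd ℂ) (φ i) / ip φ) := by
          rw [Finset.sum_comm]
          refine Finset.sum_congr rfl fun i _ => ?_
          rw [← Finset.mul_sum, ← Finset.mul_sum]
      _ = _ := by
          rw [Finset.mul_sum]
          refine Finset.sum_congr rfl fun i _ => ?_
          rw [hdiag i]
          ring
  -- the Eisenstein subset of Φ
  have hEset : Φ.filter (fun φ => ¬ ∀ μ : H →* ℂˣ, φ ≠ fun i => ((μ (ν i) : ℂ)))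
      = Finset.image (fun μ : H →* ℂˣ => fun i => ((μ (ν i) : ℂ))) Finset.univ := by
    ext φ
    simp only [Finset.mem_filter, Finset.mem_image, Finset.mem_univ, true_and,
      not_forall, not_not, ne_eq]
    constructor
    · rintro ⟨-, μ, hμ⟩
      exact ⟨μ, hμ.symm⟩
    · rintro ⟨μ, hμ⟩
      exact ⟨hμ ▸ hEis μ, μ, hμ.symm⟩
  -- eigenvalue of Eisenstein vectors
  have hlam : ∀ μ : H →* ℂˣ, lam (fun i => ((μ (ν i) : ℂ))) = d * (μ m₀ : ℂ) := by
    intro μ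
    have h1 := hEig _ (hEis μ)
    rw [hEisEig μ] at h1
    have h2 := congrFun h1 ⟨0, hn⟩
    simp only [Pi.smul_apply, smul_eq_mul] at h2
    exact (mul_right_cancel₀ (Units.ne_zero (μ (ν ⟨0, hn⟩))) h2).symm
  -- norm of Eisenstein vectors
  have hipE : ∀ μ : H →* ℂˣ, ip (fun i => ((μ (ν i) : ℂ))) = ((∑ i, (w i)⁻¹ : ℝ) : ℂ) := by
    intro μ
    rw [hip_def]
    push_cast
    refine Finset.sum_congr rfl fun i _ => ?_
    rw [mul_assoc, char_mul_conj μ (ν i), mul_one]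
  -- term of an Eisenstein vector
  have htermE : ∀ μ : H →* ℂˣ, term (fun i => ((μ (ν i) : ℂ)))
      = d * (μ m₀ : ℂ) * (Fintype.card G : ℂ) ^ 2 / ((∑ i, (w i)⁻¹ : ℝ) : ℂ) := by
    intro μ
    have h1 : term (fun i => ((μ (ν i) : ℂ)))
        = lam (fun i => ((μ (ν i) : ℂ))) / ip (fun i => ((μ (ν i) : ℂ)))
          * ∑ χ : G →* ℂˣ,
            ((‖∑ t : G, (μ (ν (x t)) : ℂ) * ((χ t : ℂ))⁻¹‖ : ℂ)) ^ 2 := by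
      rw [hterm_def, Finset.mul_sum]
      exact Finset.sum_congr rfl fun χ _ => by ring
    have h2 : ∑ χ : G →* ℂˣ,
        ((‖∑ t : G, (μ (ν (x t)) : ℂ) * ((χ t : ℂ))⁻¹‖ : ℂ)) ^ 2
        = (Fintype.card G : ℂ) ^ 2 := by
      rw [hS (fun i => ((μ (ν i) : ℂ)))]
      have h3 : ∀ t : G, (μ (ν (x t)) : ℂ) * (starRingEnd ℂ) ((μ (ν (x t)) : ℂ)) = 1 :=
        fun t => char_mul_conj μ (ν (x t))
      simp only [h3, Finset.sum_const, Finset.card_univ, nsmul_eq_mul, mul_one, sq]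
    rw [h1, h2, hlam μ, hipE μ]
    ring
  -- sum over characters of H at m₀
  have hmu : ∑ μ : H →* ℂˣ, ((μ m₀ : ℂ))
      = (if m₀ = 1 then (1 : ℂ) else 0) * (Fintype.card H : ℂ) := by
    rw [sum_chars_at]
    split_ifs <;> simp
  -- sum over the Eisenstein subset
  have hEsum : ∑ φ ∈ Φ.filter (fun φ => ¬ ∀ μ : H →* ℂˣ, φ ≠ fun i => ((μ (ν i) : ℂ))),
      term φ
      = (if m₀ = 1 then (1 : ℂ) else 0) * d * (Fintype.card G : ℂ) ^ 2
          * (Fintype.card H : ℂ) / ((∑ i, (w i)⁻¹ : ℝ) : ℂ) := by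
    rw [hEset, Finset.sum_image (fun a _ b _ hab => hinj hab)]
    calc ∑ μ : H →* ℂˣ, term (fun i => ((μ (ν i) : ℂ)))
        = ∑ μ : H →* ℂˣ, ((μ m₀ : ℂ))
            * (d * (Fintype.card G : ℂ) ^ 2 / ((∑ i, (w i)⁻¹ : ℝ) : ℂ)) := by
          refine Finset.sum_congr rfl fun μ _ => ?_
          rw [htermE μ]
          ring
      _ = _ := by
          rw [← Finset.sum_mul, hmu]
          ring
  -- put everything together
  have hsplit := Finset.sum_filter_add_sum_filter_not Φ
    (fun φ => ∀ μ : H →* ℂˣ, φ ≠ fun i => ((μ (ν i) : ℂ))) term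
  have hmain : ∑ φ ∈ Φ.filter (fun φ => ∀ μ : H →* ℂˣ, φ ≠ fun i => ((μ (ν i) : ℂ))),
      term φ
      = (Fintype.card G : ℂ) * (∑ i, (w i : ℂ) *
          ((Finset.univ.filter (fun t : G => x t = i)).card : ℂ) * A i i)
        - (if m₀ = 1 then (1 : ℂ) else 0) * d * (Fintype.card G : ℂ) ^ 2
            * (Fintype.card H : ℂ) / ((∑ i, (w i)⁻¹ : ℝ) : ℂ) := by
    rw [← htotal, ← hEsum, ← hsplit]
    ring
  exact hmain
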